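/- For every real r ≥ 1 there is a constant C(r) such that Σ_{d ≤ x} ρ(d) ≤ C(r) (log x)^r for all x ≥ 2, where ρ is the multiplicative function with ρ(p^α) = (σ(p^α)/p^α)^r − (σ(p^{α−1})/p^{α−1})^r. -/

import Mathlib

open ArithmeticFunction
open scoped ArithmeticFunction.Moebius ArithmeticFunction.sigma

/-- `ρ(d) = ∑_{e ∣ d} μ(d/e) (σ(e)/e)^r`, the multiplicative function with
`ρ(p^α) = (σ(p^α)/p^α)^r − (σ(p^{α−1})/p^{α−1})^r`. -/
noncomputable def rho (r : ℝ) (d : ℕ) : ℝ :=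
  ∑ e ∈ d.divisors, (μ (d / e) : ℝ) * ((σ 1 e : ℝ) / e) ^ r

open Nat Finset Real


-- key elementary inequality: (b-a)/b ≤ log b - log a for 0 < a ≤ b
lemma div_sub_le_log_sub {a b : ℝ} (ha : 0 < a) (hab : a ≤ b) :
    (b - a) / b ≤ Real.log b - Real.log a := by
  have hb : 0 < b := lt_of_lt_of_le ha hab
  have h := Real.log_le_sub_one_of_pos (show (0:ℝ) < a / b by positivity)
  rw [Real.log_div ha.ne' hb.ne'] at h
  have : (b - a) / b = 1 - a / b := by field_simp
  linarith

-- Mertens' first theorem (upper bound): ∑_{p ≤ N} log p / p ≤ log N + log 4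
lemma mertens_first (N : ℕ) (hN : 1 ≤ N) :
    ∑ p ∈ (N + 1).primesBelow, Real.log p / p ≤ Real.log N + Real.log 4 := by
  have hNR : (0:ℝ) < N := by exact_mod_cast hN
  -- primes in the sum are prime and ≤ N
  have hmem : ∀ p ∈ (N + 1).primesBelow, p.Prime ∧ p ≤ N := by
    intro p hp
    exact ⟨Nat.prime_of_mem_primesBelow hp, Nat.lt_succ_iff.mp (Nat.lt_of_mem_primesBelow hp)⟩
  -- the product ∏ p^(N/p) divides N!
  have hdvd : (∏ p ∈ (N + 1).primesBelow, p ^ (N / p)) ∣ N ! := by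
    have hne : ∀ p ∈ (N + 1).primesBelow, p ^ (N / p) ≠ 0 :=
      fun p hp => pow_ne_zero _ (hmem p hp).1.pos.ne'
    rw [← Nat.factorization_le_iff_dvd (Finset.prod_ne_zero_iff.mpr hne) N.factorial_ne_zero]
    rw [Nat.factorization_prod hne]
    intro q
    rw [Finset.sum_apply']
    have : ∀ p ∈ (N + 1).primesBelow, ((p ^ (N / p)).factorization) q
        = if p = q then N / p else 0 := by
      intro p hp
      rw [(hmem p hp).1.factorization_pow, Finsupp.single_apply]
    rw [Finset.sum_congr rfl this, Finset.sum_ite_eq' _ q _]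
    split_ifs with hq
    · -- q prime ≤ N; need N / q ≤ factorization of N! at q
      obtain ⟨hqp, hqN⟩ := hmem q hq
      rw [← Nat.Prime.pow_dvd_iff_le_factorization hqp N.factorial_ne_zero]
      rw [Nat.Prime.pow_dvd_factorial_iff hqp (Nat.lt_succ_self _)]
      have h1 : 1 ∈ Ico 1 (Nat.log q N + 1) := by
        simp only [mem_Ico]
        refine ⟨le_refl _, ?_⟩
        have : 1 ≤ Nat.log q N := Nat.le_log_of_pow_le hqp.one_lt (by simpa using hqN)
        omega
      calc N / q = N / q ^ 1 := by rw [pow_one]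
        _ ≤ ∑ i ∈ Ico 1 (Nat.log q N + 1), N / q ^ i :=
          Finset.single_le_sum (f := fun i => N / q ^ i) (fun _ _ => Nat.zero_le _) h1
    · exact Nat.zero_le _
  -- take logs
  have hlogprod : ∑ p ∈ (N + 1).primesBelow, (N / p : ℕ) * Real.log p ≤ (N:ℝ) * Real.log N := by
    have h1 : ((∏ p ∈ (N + 1).primesBelow, p ^ (N / p) : ℕ) : ℝ)
        ≤ ((N ! : ℕ) : ℝ) := by
      exact_mod_cast Nat.le_of_dvd N.factorial_pos hdvd
    have hpp0 : (0:ℝ) < ((∏ p ∈ (N + 1).primesBelow, p ^ (N / p) : ℕ) : ℝ) := by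
      have : 0 < ∏ p ∈ (N + 1).primesBelow, p ^ (N / p) :=
        Finset.prod_pos fun p hp => pow_pos (hmem p hp).1.pos _
      exact_mod_cast this
    have h2 := Real.log_le_log hpp0 h1
    rw [Nat.cast_prod, Real.log_prod (fun p hp => by
      have := (hmem p hp).1.pos; positivity)] at h2
    simp_rw [Nat.cast_pow, Real.log_pow] at h2
    refine h2.trans ?_
    calc Real.log (N !) ≤ Real.log ((N:ℕ) ^ N : ℕ) := by
          apply Real.log_le_log (by exact_mod_cast N.factorial_pos)
          exact_mod_cast Nat.factorial_le_pow N
      _ = (N:ℝ) * Real.log N := by rw [Nat.cast_pow, Real.log_pow]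
  -- sum of log p ≤ N log 4
  have hcheby : ∑ p ∈ (N + 1).primesBelow, Real.log p ≤ (N:ℝ) * Real.log 4 := by
    have h1 : ((primorial N : ℕ) : ℝ) ≤ ((4 ^ N : ℕ) : ℝ) := by
      exact_mod_cast primorial_le_4_pow N
    have h2 := Real.log_le_log (by exact_mod_cast primorial_pos N) h1
    rw [Nat.cast_pow, Real.log_pow] at h2
    rw [primorial, Nat.cast_prod, Real.log_prod] at h2
    · have hset : (N + 1).primesBelow = {p ∈ range (N + 1) | p.Prime} := rfl
      rw [hset]
      convert h2 using 2 <;> norm_num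
    · intro p hp
      have : p.Prime := (Finset.mem_filter.mp hp).2
      have := this.pos
      positivity
  -- combine: N * (log p / p) ≤ (N/p) * log p + log p
  have hterm : ∀ p ∈ (N + 1).primesBelow,
      (N:ℝ) * (Real.log p / p) ≤ (N / p : ℕ) * Real.log p + Real.log p := by
    intro p hp
    obtain ⟨hpp, hpN⟩ := hmem p hp
    have hp0 : (0:ℝ) < p := by exact_mod_cast hpp.pos
    have hlog : (0:ℝ) ≤ Real.log p := Real.log_natCast_nonneg p
    have hdiv : (N:ℝ) / p ≤ (N / p : ℕ) + 1 := by
      have : N < (N / p + 1) * p := by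
        have h1 := Nat.div_add_mod N p
        have h2 := Nat.mod_lt N hpp.pos
        have : (N / p + 1) * p = p * (N / p) + p := by ring
        omega
      rw [div_le_iff₀ hp0]
      calc (N:ℝ) ≤ ((N / p + 1) * p : ℕ) := by exact_mod_cast this.le
        _ = ((N / p : ℕ) + 1) * p := by push_cast; ring
    calc (N:ℝ) * (Real.log p / p) = ((N:ℝ) / p) * Real.log p := by ring
      _ ≤ ((N / p : ℕ) + 1) * Real.log p := by
          exact mul_le_mul_of_nonneg_right hdiv hlog
      _ = (N / p : ℕ) * Real.log p + Real.log p := by ring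
  have := Finset.sum_le_sum hterm
  rw [← Finset.mul_sum, Finset.sum_add_distrib] at this
  have hfinal : (N:ℝ) * ∑ p ∈ (N + 1).primesBelow, Real.log p / p
      ≤ (N:ℝ) * Real.log N + (N:ℝ) * Real.log 4 := this.trans (by linarith)
  have h3 : (N:ℝ) * (Real.log N + Real.log 4) = (N:ℝ) * Real.log N + (N:ℝ) * Real.log 4 := by
    ring
  exact le_of_mul_le_mul_left (by linarith) hNR

noncomputable def MK : ℝ := 1 + Real.log 4 / Real.log 2 - Real.log (Real.log 2)

lemma primesBelow_three : Nat.primesBelow 3 = {2} := by decide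

lemma sum_primesBelow_succ (f : ℕ → ℝ) (N : ℕ) :
    ∑ p ∈ (N + 2).primesBelow, f p
      = ∑ p ∈ (N + 1).primesBelow, f p + (if (N + 1).Prime then f (N + 1) else 0) := by
  rw [show N + 2 = (N + 1).succ from rfl, Nat.primesBelow_succ]
  split_ifs with h
  · rw [Finset.sum_insert (Nat.notMem_primesBelow _)]; ring
  · ring

lemma abel_invariant (N : ℕ) (hN : 2 ≤ N) :
    ∑ p ∈ (N + 1).primesBelow, 1 / (p:ℝ)
      ≤ Real.log (Real.log N) - Real.log 4 / Real.log N + MK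
        + (∑ p ∈ (N + 1).primesBelow, Real.log p / p) / Real.log N := by
  induction N, hN using Nat.le_induction with
  | base =>
    rw [primesBelow_three, MK]
    have h2 : (0:ℝ) < Real.log 2 := Real.log_pos (by norm_num)
    simp only [Finset.sum_singleton]
    have : (Real.log 2 / 2) / Real.log 2 = 1/2 := by field_simp
    push_cast
    rw [this]
    have : (0:ℝ) ≤ Real.log 4 / Real.log 2 := by positivity
    linarith
  | succ N hN ih =>
    have hN1 : (1:ℝ) < N := by exact_mod_cast hN
    have ha : (0:ℝ) < Real.log N := Real.log_pos hN1
    have hb : (0:ℝ) < Real.log (N + 1) := Real.log_pos (by push_cast; linarith)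
    have hab : Real.log N ≤ Real.log (N + 1) := by
      apply Real.log_le_log (by positivity); push_cast; linarith
    set a := Real.log N with ha_def
    set b := Real.log ((N:ℝ) + 1) with hb_def
    have hAM : ∑ p ∈ (N + 1).primesBelow, Real.log p / p ≤ a + Real.log 4 :=
      mertens_first N (by omega)
    set A := ∑ p ∈ (N + 1).primesBelow, Real.log p / p with hA_def
    have hkey : (b - a) / b ≤ Real.log b - Real.log a := div_sub_le_log_sub ha hab
    have hSP := sum_primesBelow_succ (fun p => 1 / (p:ℝ)) N
    have hAMs := sum_primesBelow_succ (fun p => Real.log p / p) N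
    have hcast : ((N + 1 : ℕ) : ℝ) = (N:ℝ) + 1 := by push_cast; ring
    have hδ : (if (N + 1).Prime then 1 / ((N + 1 : ℕ):ℝ) else 0)
        = (if (N + 1).Prime then Real.log ((N + 1 : ℕ)) / ((N + 1 : ℕ):ℝ) else 0) / b := by
      split_ifs with h
      · rw [hcast, eq_div_iff hb.ne']
        field_simp
        exact hb_def
      · simp
    set ε := (if (N + 1).Prime then Real.log ((N + 1 : ℕ):ℝ) / ((N + 1 : ℕ):ℝ) else 0) with hε_def
    have hεnn : 0 ≤ ε := by
      rw [hε_def]; split_ifs with h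
      · have : (1:ℝ) ≤ ((N + 1 : ℕ):ℝ) := by exact_mod_cast Nat.one_le_iff_ne_zero.mpr (by omega)
        positivity
      · exact le_refl 0
    rw [show N + 1 + 1 = N + 2 from rfl, hcast, hSP, hAMs, hδ]
    -- goal: SP N + ε / b ≤ log b - log 4 / b + MK + (A + ε) / b
    have e1 : A/a - A/b - Real.log 4/a + Real.log 4/b = (A - Real.log 4) * (1/a - 1/b) := by
      field_simp; ring
    have e2 : a * (1/a - 1/b) = (b - a)/b := by field_simp
    have e3 : (A - Real.log 4) * (1/a - 1/b) ≤ a * (1/a - 1/b) := by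
      apply mul_le_mul_of_nonneg_right (by linarith)
      have : 1/b ≤ 1/a := by
        apply one_div_le_one_div_of_le ha hab
      linarith
    have e4 : (A + ε)/b = A/b + ε/b := by ring
    linarith [ih]

lemma sum_one_div_prime_le (N : ℕ) (hN : 2 ≤ N) :
    ∑ p ∈ (N + 1).primesBelow, 1 / (p:ℝ)
      ≤ Real.log (Real.log N) + MK + 1 := by
  have h := abel_invariant N hN
  have hN1 : (1:ℝ) < N := by exact_mod_cast hN
  have ha : (0:ℝ) < Real.log N := Real.log_pos hN1
  have hAM := mertens_first N (by omega)
  have hnn : (0:ℝ) ≤ ∑ p ∈ (N + 1).primesBelow, Real.log p / p := by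
    apply Finset.sum_nonneg
    intro p hp
    have : (0:ℝ) ≤ Real.log p := Real.log_natCast_nonneg p
    positivity
  have h2 : (∑ p ∈ (N + 1).primesBelow, Real.log p / p) / Real.log N
      ≤ (Real.log N + Real.log 4) / Real.log N := by gcongr
  have e : (Real.log N + Real.log 4) / Real.log N = 1 + Real.log 4 / Real.log N := by
    field_simp
  linarith

lemma telescope_sum (N : ℕ) (hN : 1 ≤ N) :
    ∑ n ∈ Finset.Icc 2 N, (1/((n:ℝ) - 1) - 1/n) = 1 - 1/(N:ℝ) := by
  induction N, hN using Nat.le_induction with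
  | base => simp
  | succ N hN ih =>
    rw [Finset.sum_Icc_succ_top (by omega : 2 ≤ N + 1), ih]
    have hN0 : (0:ℝ) < N := by exact_mod_cast hN
    push_cast
    rw [add_sub_cancel_right]
    ring

lemma sum_one_div_pred_prime_le (N : ℕ) (hN : 2 ≤ N) :
    ∑ p ∈ (N + 1).primesBelow, 1 / ((p:ℝ) - 1)
      ≤ Real.log (Real.log N) + MK + 2 := by
  have key : ∑ p ∈ (N + 1).primesBelow, (1/((p:ℝ) - 1) - 1/p) ≤ 1 := by
    have hsub : (N + 1).primesBelow ⊆ Finset.Icc 2 N := by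
      intro p hp
      have h1 := Nat.prime_of_mem_primesBelow hp
      have h2 := Nat.lt_of_mem_primesBelow hp
      rw [Finset.mem_Icc]
      exact ⟨h1.two_le, by omega⟩
    have hnn : ∀ n ∈ Finset.Icc 2 N, n ∉ (N + 1).primesBelow →
        (0:ℝ) ≤ 1/((n:ℝ) - 1) - 1/n := by
      intro n hn _
      rw [Finset.mem_Icc] at hn
      have h2 : (2:ℝ) ≤ n := by exact_mod_cast hn.1
      have : 1/(n:ℝ) ≤ 1/((n:ℝ) - 1) := by
        apply one_div_le_one_div_of_le <;> linarith
      linarith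
    calc ∑ p ∈ (N + 1).primesBelow, (1/((p:ℝ) - 1) - 1/p)
        ≤ ∑ n ∈ Finset.Icc 2 N, (1/((n:ℝ) - 1) - 1/n) :=
          Finset.sum_le_sum_of_subset_of_nonneg hsub hnn
      _ = 1 - 1/(N:ℝ) := telescope_sum N (by omega)
      _ ≤ 1 := by
          have : (0:ℝ) < N := by exact_mod_cast (by omega : 0 < N)
          have : 0 ≤ 1/(N:ℝ) := by positivity
          linarith
  have := sum_one_div_prime_le N hN
  have hsplit : ∑ p ∈ (N + 1).primesBelow, 1 / ((p:ℝ) - 1)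
      = ∑ p ∈ (N + 1).primesBelow, 1/(p:ℝ)
        + ∑ p ∈ (N + 1).primesBelow, (1/((p:ℝ) - 1) - 1/p) := by
    rw [← Finset.sum_add_distrib]
    apply Finset.sum_congr rfl
    intro p _
    ring
  rw [hsplit]
  linarith

noncomputable def Fsig (r : ℝ) : ArithmeticFunction ℝ :=
  ⟨fun n => if n = 0 then 0 else ((σ 1 n : ℝ) / n) ^ r, by simp⟩

lemma Fsig_apply (r : ℝ) {n : ℕ} (hn : n ≠ 0) : Fsig r n = ((σ 1 n : ℝ) / n) ^ r := if_neg hn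

lemma Fsig_isMultiplicative (r : ℝ) : (Fsig r).IsMultiplicative := by
  constructor
  · rw [Fsig_apply r one_ne_zero, sigma_one_apply]
    simp
  · intro m n h
    rcases eq_or_ne m 0 with hm | hm
    · subst hm
      have hn : n = 1 := by simpa using h.symm
      subst hn
      show Fsig r 0 = Fsig r 0 * Fsig r 1
      rw [ArithmeticFunction.map_zero, zero_mul]
    · rcases eq_or_ne n 0 with hn | hn
      · subst hn
        have hm1 : m = 1 := by simpa using h
        subst hm1
        show Fsig r 0 = Fsig r 1 * Fsig r 0
        rw [ArithmeticFunction.map_zero, mul_zero]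
      · rw [Fsig_apply r (mul_ne_zero hm hn), Fsig_apply r hm, Fsig_apply r hn]
        rw [isMultiplicative_sigma.map_mul_of_coprime h]
        have hm' : (0:ℝ) < m := by exact_mod_cast Nat.pos_of_ne_zero hm
        have hn' : (0:ℝ) < n := by exact_mod_cast Nat.pos_of_ne_zero hn
        have hσm : (0:ℝ) ≤ (σ 1 m : ℝ) / m := by positivity
        have hσn : (0:ℝ) ≤ (σ 1 n : ℝ) / n := by positivity
        rw [← Real.mul_rpow hσm hσn]
        congr 1
        push_cast
        field_simp

noncomputable def Rho (r : ℝ) : ArithmeticFunction ℝ := ↑moebius * Fsig r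

lemma rho_eq (r : ℝ) (d : ℕ) : rho r d = Rho r d := by
  rcases eq_or_ne d 0 with rfl | hd
  · simp [rho, Rho]
  · rw [Rho, mul_apply,
      Nat.sum_divisorsAntidiagonal' (f := fun a b => ((moebius : ArithmeticFunction ℤ) : ArithmeticFunction ℝ) a * Fsig r b)]
    apply Finset.sum_congr rfl
    intro e he
    rw [Fsig_apply r (Nat.pos_of_mem_divisors he).ne', ArithmeticFunction.intCoe_apply]

lemma Rho_isMultiplicative (r : ℝ) : (Rho r).IsMultiplicative :=
  (isMultiplicative_moebius.intCast).mul (Fsig_isMultiplicative r)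

lemma rho_one (r : ℝ) : rho r 1 = 1 := by
  rw [rho_eq]; exact (Rho_isMultiplicative r).map_one

lemma rho_mul (r : ℝ) {m n : ℕ} (h : m.Coprime n) : rho r (m * n) = rho r m * rho r n := by
  rw [rho_eq, rho_eq, rho_eq]; exact (Rho_isMultiplicative r).map_mul_of_coprime h

-- sum of rho over divisors
lemma sum_divisors_rho (r : ℝ) {d : ℕ} (hd : d ≠ 0) :
    ∑ e ∈ d.divisors, rho r e = ((σ 1 d : ℝ) / d) ^ r := by
  have h1 : ∑ e ∈ d.divisors, rho r e = (↑zeta * Rho r) d := by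
    rw [coe_zeta_mul_apply]
    exact Finset.sum_congr rfl fun e _ => rho_eq r e
  rw [h1, Rho, ← mul_assoc, coe_zeta_mul_coe_moebius, one_mul, Fsig_apply r hd]

lemma sigma_pp_cast (p k : ℕ) (hp : p.Prime) :
    ((σ 1 (p ^ k) : ℕ) : ℝ) = ∑ i ∈ range (k + 1), (p:ℝ) ^ i := by
  rw [sigma_one_apply, Nat.sum_divisors_prime_pow hp]
  push_cast
  rfl

lemma sigr_pp_mono (r : ℝ) (hr : 0 ≤ r) (p k : ℕ) (hp : p.Prime) :
    ((σ 1 (p ^ k) : ℝ) / (p ^ k)) ^ r ≤ ((σ 1 (p ^ (k+1)) : ℝ) / (p ^ (k+1))) ^ r := by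
  have hq : (2:ℝ) ≤ p := by exact_mod_cast hp.two_le
  have hq0 : (0:ℝ) < p := by linarith
  apply Real.rpow_le_rpow
  · have : (0:ℝ) ≤ (σ 1 (p ^ k) : ℝ) := by positivity
    positivity
  · rw [sigma_pp_cast p k hp, sigma_pp_cast p (k+1) hp]
    rw [div_le_div_iff₀ (by positivity) (by positivity)]
    have hrec : ∑ i ∈ range (k + 2), (p:ℝ) ^ i
        = (p:ℝ) * ∑ i ∈ range (k + 1), (p:ℝ) ^ i + 1 := by
      rw [Finset.sum_range_succ' (fun i => (p:ℝ) ^ i)]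
      rw [Finset.mul_sum]
      simp [pow_succ, mul_comm]
    rw [hrec]
    have hk : (0:ℝ) < (p:ℝ) ^ k := by positivity
    have hsum : (0:ℝ) ≤ ∑ i ∈ range (k + 1), (p:ℝ) ^ i :=
      Finset.sum_nonneg fun i _ => by positivity
    push_cast
    ring_nf
    nlinarith [hk, hsum]
  · exact hr

lemma sigr_pp_le (r : ℝ) (hr : 0 ≤ r) (p k : ℕ) (hp : p.Prime) :
    ((σ 1 (p ^ k) : ℝ) / (p ^ k)) ^ r ≤ Real.exp (r * (1 / ((p:ℝ) - 1))) := by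
  have hq : (2:ℝ) ≤ p := by exact_mod_cast hp.two_le
  have hq1 : (1:ℝ) < p := by linarith
  have hp1 : (0:ℝ) < (p:ℝ) - 1 := by linarith
  have hpos : (0:ℝ) < 1 + 1 / ((p:ℝ) - 1) := by
    have := one_div_pos.mpr hp1
    linarith
  have h1 : ((σ 1 (p ^ k) : ℝ) / (p ^ k)) ≤ 1 + 1 / ((p:ℝ) - 1) := by
    rw [sigma_pp_cast p k hp, geom_sum_eq (by linarith : (p:ℝ) ≠ 1)]
    rw [div_div]
    have e1 : (1:ℝ) + 1 / ((p:ℝ) - 1) = (p:ℝ) / ((p:ℝ) - 1) := by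
      field_simp
      ring
    rw [e1, div_le_div_iff₀ (mul_pos hp1 (by positivity)) hp1]
    have : (p:ℝ) ^ (k+1) = (p:ℝ) * (p:ℝ)^k := by ring
    nlinarith [pow_pos (by linarith : (0:ℝ) < p) k, this]
  calc ((σ 1 (p ^ k) : ℝ) / (p ^ k)) ^ r ≤ (1 + 1 / ((p:ℝ) - 1)) ^ r := by
        apply Real.rpow_le_rpow ?_ h1 hr
        exact div_nonneg (Nat.cast_nonneg _) (pow_nonneg (Nat.cast_nonneg p) k)
    _ = Real.exp (Real.log (1 + 1 / ((p:ℝ) - 1)) * r) := by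
        rw [Real.rpow_def_of_pos hpos]
    _ ≤ Real.exp (r * (1 / ((p:ℝ) - 1))) := by
        apply Real.exp_le_exp.mpr
        have := Real.log_le_sub_one_of_pos hpos
        have hr' : Real.log (1 + 1 / ((p:ℝ) - 1)) ≤ 1 / ((p:ℝ) - 1) := by linarith
        calc Real.log (1 + 1 / ((p:ℝ) - 1)) * r ≤ (1 / ((p:ℝ) - 1)) * r :=
              mul_le_mul_of_nonneg_right hr' hr
          _ = r * (1 / ((p:ℝ) - 1)) := by ring

lemma sum_range_rho_pp (r : ℝ) (p : ℕ) (hp : p.Prime) (K : ℕ) :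
    ∑ k ∈ range (K + 1), rho r (p ^ k) = ((σ 1 (p ^ K) : ℝ) / (p ^ K)) ^ r := by
  rw [← Nat.sum_divisors_prime_pow hp (f := rho r), ← Nat.cast_pow]
  exact sum_divisors_rho r (pow_ne_zero _ hp.pos.ne')

lemma rho_pp_nonneg (r : ℝ) (hr : 0 ≤ r) (p : ℕ) (hp : p.Prime) (k : ℕ) :
    0 ≤ rho r (p ^ k) := by
  cases k with
  | zero => rw [pow_zero, rho_one]; norm_num
  | succ k =>
    have h1 := sum_range_rho_pp r p hp k
    have h2 := sum_range_rho_pp r p hp (k + 1)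
    have h3 : rho r (p ^ (k+1))
        = ((σ 1 (p ^ (k+1)) : ℝ) / (p ^ (k+1))) ^ r - ((σ 1 (p ^ k) : ℝ) / (p ^ k)) ^ r := by
      rw [← h1, ← h2, Finset.sum_range_succ]
      ring
    rw [h3, sub_nonneg]
    exact sigr_pp_mono r hr p k hp

lemma rho_nonneg (r : ℝ) (hr : 0 ≤ r) (n : ℕ) : 0 ≤ rho r n := by
  rcases eq_or_ne n 0 with rfl | hn
  · simp [rho]
  · rw [rho_eq, (Rho_isMultiplicative r).multiplicative_factorization _ hn, Finsupp.prod]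
    apply Finset.prod_nonneg
    intro p hp
    have hpp : p.Prime := Nat.prime_of_mem_primeFactors (by
      rwa [Nat.support_factorization] at hp)
    have := rho_pp_nonneg r hr p hpp (n.factorization p)
    rwa [rho_eq] at this

lemma sum_range_rho_pp_le (r : ℝ) (hr : 0 ≤ r) (p : ℕ) (hp : p.Prime) (n : ℕ) :
    ∑ k ∈ range n, rho r (p ^ k) ≤ Real.exp (r * (1 / ((p:ℝ) - 1))) := by
  cases n with
  | zero => simp [Real.exp_nonneg]
  | succ K =>
    rw [sum_range_rho_pp r p hp K]
    exact sigr_pp_le r hr p K hp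

lemma summable_rho_pp (r : ℝ) (hr : 0 ≤ r) (p : ℕ) (hp : p.Prime) :
    Summable fun k => ‖rho r (p ^ k)‖ := by
  have hnn : ∀ k, 0 ≤ rho r (p ^ k) := fun k => rho_pp_nonneg r hr p hp k
  have : ∀ k, ‖rho r (p ^ k)‖ = rho r (p ^ k) := fun k => by
    rw [Real.norm_eq_abs, abs_of_nonneg (hnn k)]
  simp_rw [this]
  apply summable_of_sum_range_le hnn
  exact fun n => sum_range_rho_pp_le r hr p hp n

theorem sum_rho_le_log_pow (r : ℝ) (hr : 1 ≤ r) :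
    ∃ C : ℝ, ∀ x : ℝ, 2 ≤ x →
      (∑ d ∈ Finset.Icc 1 ⌊x⌋₊, rho r d) ≤ C * (Real.log x) ^ r := by
  classical
  have hr0 : 0 ≤ r := le_trans zero_le_one hr
  refine ⟨Real.exp (r * (MK + 2)), fun x hx => ?_⟩
  set M := ⌊x⌋₊ with hM_def
  have hM2 : 2 ≤ M := Nat.le_floor (by exact_mod_cast hx)
  have hx0 : (0:ℝ) ≤ x := by linarith
  have hMx : (M:ℝ) ≤ x := Nat.floor_le hx0
  have hM1 : (1:ℝ) < M := by exact_mod_cast hM2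
  have hlogM : (0:ℝ) < Real.log M := Real.log_pos hM1
  -- Euler product data
  have hEuler := EulerProduct.summable_and_hasSum_smoothNumbers_prod_primesBelow_tsum
    (f := rho r) (rho_one r) (fun {m n} h => rho_mul r h)
    (fun {p} hp => summable_rho_pp r hr0 p hp) (M + 1)
  have hsummable : Summable (fun m : (M+1).smoothNumbers => rho r (m:ℕ)) :=
    hEuler.1.of_norm
  -- step 1: partial sum ≤ tsum over smooth numbers
  have hmem : ∀ d ∈ Finset.Icc 1 M, d ∈ (M+1).smoothNumbers := by
    intro d hd
    rw [Finset.mem_Icc] at hd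
    rw [Nat.mem_smoothNumbers]
    refine ⟨by omega, fun p hp => ?_⟩
    have hpd : p ∣ d := Nat.dvd_of_mem_primeFactorsList hp
    have : p ≤ d := Nat.le_of_dvd (by omega) hpd
    omega
  have step1 : ∑ d ∈ Finset.Icc 1 M, rho r d
      ≤ ∑' m : (M+1).smoothNumbers, rho r (m:ℕ) := by
    have he : ∑ d ∈ Finset.Icc 1 M, rho r d
        = ∑ m ∈ (Finset.Icc 1 M).subtype (· ∈ (M+1).smoothNumbers), rho r (m:ℕ) := by
      rw [Finset.sum_subtype_eq_sum_filter, Finset.filter_true_of_mem hmem]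
    rw [he]
    exact hsummable.sum_le_tsum _ (fun i _ => rho_nonneg r hr0 i)
  have step2 : ∑' m : (M+1).smoothNumbers, rho r (m:ℕ)
      = ∏ p ∈ (M+1).primesBelow, ∑' k : ℕ, rho r (p ^ k) := hEuler.2.tsum_eq
  -- step 3
  have step3 : ∏ p ∈ (M+1).primesBelow, ∑' k : ℕ, rho r (p ^ k)
      ≤ ∏ p ∈ (M+1).primesBelow, Real.exp (r * (1 / ((p:ℝ) - 1))) := by
    apply Finset.prod_le_prod
    · intro p hp
      exact tsum_nonneg fun k => rho_pp_nonneg r hr0 p (Nat.prime_of_mem_primesBelow hp) k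
    · intro p hp
      have hpp := Nat.prime_of_mem_primesBelow hp
      apply Summable.tsum_le_of_sum_range_le ((summable_rho_pp r hr0 p hpp).of_norm)
      exact fun n => sum_range_rho_pp_le r hr0 p hpp n
  have step4 : ∏ p ∈ (M+1).primesBelow, Real.exp (r * (1 / ((p:ℝ) - 1)))
      = Real.exp (∑ p ∈ (M+1).primesBelow, r * (1 / ((p:ℝ) - 1))) :=
    (Real.exp_sum _ _).symm
  have step5 : ∑ p ∈ (M+1).primesBelow, r * (1 / ((p:ℝ) - 1))
      ≤ r * (Real.log (Real.log M) + MK + 2) := by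
    rw [← Finset.mul_sum]
    exact mul_le_mul_of_nonneg_left (sum_one_div_pred_prime_le M hM2) hr0
  have step6 : Real.exp (r * (Real.log (Real.log M) + MK + 2))
      = Real.exp (r * (MK + 2)) * (Real.log M) ^ r := by
    rw [Real.rpow_def_of_pos hlogM, ← Real.exp_add]
    ring_nf
  have step7 : (Real.log M) ^ r ≤ (Real.log x) ^ r := by
    apply Real.rpow_le_rpow hlogM.le (Real.log_le_log (by positivity) hMx) hr0
  calc ∑ d ∈ Finset.Icc 1 M, rho r d
      ≤ ∏ p ∈ (M+1).primesBelow, ∑' k : ℕ, rho r (p ^ k) := step1.trans (le_of_eq step2)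
    _ ≤ Real.exp (∑ p ∈ (M+1).primesBelow, r * (1 / ((p:ℝ) - 1))) := by
        rw [← step4]; exact step3
    _ ≤ Real.exp (r * (Real.log (Real.log M) + MK + 2)) := Real.exp_le_exp.mpr step5
    _ = Real.exp (r * (MK + 2)) * (Real.log M) ^ r := step6
    _ ≤ Real.exp (r * (MK + 2)) * (Real.log x) ^ r :=
        mul_le_mul_of_nonneg_left step7 (Real.exp_nonneg _)
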